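/- Let M be an m×m matrix over a commutative ring and, for index sets, let M[j;k] denote the minor with rows j and columns k deleted. Then the Jacobi identity holds: M[∅;∅]·M[{j₁,j₂};{k₁,k₂}] = M[{j₁};{k₁}]·M[{j₂};{k₂}] − M[{j₁};{k₂}]·M[{j₂};{k₁}], for j₁ < j₂ and k₁ < k₂, where M[∅;∅] = det M. -/

import Mathlib

open Matrix

/-- The strictly monotone map `Fin n → Fin (n+2)` skipping `j₁ < j₂`;
used to delete two rows (or columns) from a matrix. -/
def skipTwo {n : ℕ} (j₁ j₂ : Fin (n + 2)) (h : j₁ < j₂) : Fin n → Fin (n + 2) :=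
  fun i => j₂.succAbove
    ((j₁.castLT (lt_of_lt_of_le (Fin.lt_iff_val_lt_val.mp h)
      (Nat.lt_succ_iff.mp j₂.isLt)) : Fin (n + 1)).succAbove i)

section DJaux

variable {R : Type*} [CommRing R]

lemma dj_updateRow_mul {m : ℕ} (A : Matrix (Fin m) (Fin m) R) (j : Fin m) (v : Fin m → R)
    (M : Matrix (Fin m) (Fin m) R) :
    (A.updateRow j v) * M = (A * M).updateRow j (v ᵥ* M) := by
  ext i c
  by_cases hij : i = j
  · subst hij
    simp [Matrix.mul_apply, Matrix.vecMul, dotProduct]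
  · simp [Matrix.mul_apply, Matrix.updateRow_ne hij]

lemma dj_updateRow_comm {m : ℕ} (A : Matrix (Fin m) (Fin m) R) (j₁ j₂ : Fin m)
    (u w : Fin m → R) (h : j₁ ≠ j₂) :
    (A.updateRow j₁ u).updateRow j₂ w = (A.updateRow j₂ w).updateRow j₁ u := by
  ext i c
  rcases eq_or_ne i j₁ with rfl | h1
  · simp [Matrix.updateRow_ne h, Matrix.updateRow_apply, h]
  · rcases eq_or_ne i j₂ with rfl | h2
    · simp [Matrix.updateRow_ne h1]
    · simp [Matrix.updateRow_ne h1, Matrix.updateRow_ne h2]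

lemma dj_det_updateRow_expand {m : ℕ} (A : Matrix (Fin m) (Fin m) R) (j : Fin m)
    (w : Fin m → R) :
    (A.updateRow j w).det = ∑ b, w b * (A.updateRow j (Pi.single b 1)).det := by
  have hw : w = ∑ b : Fin m, w b • (Pi.single b 1 : Fin m → R) := by
    funext c
    simp [Finset.sum_apply, Pi.single_apply]
  conv_lhs => rw [hw]
  have h := (Matrix.detRowAlternating :
      (Fin m → R) [⋀^Fin m]→ₗ[R] R).toMultilinearMap.map_update_sum
      Finset.univ j (fun b => w b • (Pi.single b 1 : Fin m → R)) A
  refine h.trans ?_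
  refine Finset.sum_congr rfl fun b _ => ?_
  exact det_updateRow_smul A j (w b) (Pi.single b 1)

lemma dj_det_single_single {m : ℕ} (j₁ j₂ a b : Fin m) (h : j₁ ≠ j₂) :
    (((1 : Matrix (Fin m) (Fin m) R).updateRow j₁ (Pi.single a 1)).updateRow j₂
        (Pi.single b 1)).det
      = if a = j₁ ∧ b = j₂ then 1 else if a = j₂ ∧ b = j₁ then -1 else 0 := by
  have one_row : ∀ i : Fin m, (1 : Matrix (Fin m) (Fin m) R) i = Pi.single i 1 := by
    intro i; funext c; simp [Matrix.one_apply, Pi.single_apply, eq_comm]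
  have hj1row : (((1 : Matrix (Fin m) (Fin m) R).updateRow j₁ (Pi.single a 1)).updateRow j₂
      (Pi.single b 1)) j₁ = Pi.single a 1 := by
    rw [Matrix.updateRow_ne h, Matrix.updateRow_self]
  have hj2row : (((1 : Matrix (Fin m) (Fin m) R).updateRow j₁ (Pi.single a 1)).updateRow j₂
      (Pi.single b 1)) j₂ = Pi.single b 1 := Matrix.updateRow_self
  by_cases h1 : a = j₁ ∧ b = j₂
  · obtain ⟨rfl, rfl⟩ := h1
    rw [if_pos ⟨rfl, rfl⟩, ← one_row, Matrix.updateRow_eq_self, ← one_row,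
      Matrix.updateRow_eq_self, det_one]
  · rw [if_neg h1]
    by_cases h2 : a = j₂ ∧ b = j₁
    · obtain ⟨rfl, rfl⟩ := h2
      rw [if_pos ⟨rfl, rfl⟩]
      have hswap : ((1 : Matrix (Fin m) (Fin m) R).updateRow b (Pi.single a 1)).updateRow a
          (Pi.single b 1) = (1 : Matrix (Fin m) (Fin m) R).submatrix (Equiv.swap b a) id := by
        ext i c
        rcases eq_or_ne i a with rfl | hia
        · simp [Matrix.updateRow_self, Matrix.submatrix_apply, Equiv.swap_apply_right,
            Matrix.one_apply, Pi.single_apply, eq_comm]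
        · rcases eq_or_ne i b with rfl | hib
          · simp [Matrix.updateRow_ne hia, Matrix.updateRow_self, Matrix.submatrix_apply,
              Equiv.swap_apply_left, Matrix.one_apply, Pi.single_apply, eq_comm]
          · rw [Matrix.submatrix_apply, Equiv.swap_apply_of_ne_of_ne hib hia]
            rw [Matrix.updateRow_ne hia, Matrix.updateRow_ne hib]
            rfl
      rw [hswap, det_permute, det_one, mul_one, Equiv.Perm.sign_swap h]
      simp
    · rw [if_neg h2]
      rcases eq_or_ne a b with rfl | hab
      · exact det_zero_of_row_eq h (hj1row.trans hj2row.symm)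
      · by_cases ha1 : a = j₁
        · have hb2 : b ≠ j₂ := fun hb => h1 ⟨ha1, hb⟩
          have hb1 : b ≠ j₁ := by rw [← ha1]; exact hab.symm
          have hrow : (((1 : Matrix (Fin m) (Fin m) R).updateRow j₁
              (Pi.single a 1)).updateRow j₂ (Pi.single b 1)) b = Pi.single b 1 := by
            rw [Matrix.updateRow_ne hb2, Matrix.updateRow_ne hb1, one_row]
          exact det_zero_of_row_eq hb2 (hrow.trans hj2row.symm)
        · by_cases ha2 : a = j₂
          · have hb1 : b ≠ j₁ := fun hb => h2 ⟨ha2, hb⟩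
            have hb2 : b ≠ j₂ := by rw [← ha2]; exact hab.symm
            have hrow : (((1 : Matrix (Fin m) (Fin m) R).updateRow j₁
                (Pi.single a 1)).updateRow j₂ (Pi.single b 1)) b = Pi.single b 1 := by
              rw [Matrix.updateRow_ne hb2, Matrix.updateRow_ne hb1, one_row]
            exact det_zero_of_row_eq hb2 (hrow.trans hj2row.symm)
          · have hrow : (((1 : Matrix (Fin m) (Fin m) R).updateRow j₁
                (Pi.single a 1)).updateRow j₂ (Pi.single b 1)) a = Pi.single a 1 := by
              rw [Matrix.updateRow_ne ha2, Matrix.updateRow_ne ha1, one_row]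
            exact det_zero_of_row_eq ha1 (hrow.trans hj1row.symm)

lemma dj_det_double_update {m : ℕ} (j₁ j₂ : Fin m) (h : j₁ ≠ j₂) (u w : Fin m → R) :
    (((1 : Matrix (Fin m) (Fin m) R).updateRow j₁ u).updateRow j₂ w).det
      = u j₁ * w j₂ - u j₂ * w j₁ := by
  rw [dj_det_updateRow_expand]
  have step : ∀ b : Fin m,
      (((1 : Matrix (Fin m) (Fin m) R).updateRow j₁ u).updateRow j₂ (Pi.single b 1)).det
        = ∑ a, u a * ((((1 : Matrix (Fin m) (Fin m) R).updateRow j₁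
            (Pi.single a 1)).updateRow j₂ (Pi.single b 1)).det) := by
    intro b
    rw [dj_updateRow_comm _ _ _ _ _ h, dj_det_updateRow_expand]
    refine Finset.sum_congr rfl fun a _ => ?_
    rw [dj_updateRow_comm _ _ _ _ _ h.symm]
  simp only [step, dj_det_single_single _ _ _ _ h]
  have hsplit : ∀ a b : Fin m,
      (if a = j₁ ∧ b = j₂ then (1 : R) else if a = j₂ ∧ b = j₁ then -1 else 0)
        = (if a = j₁ then (if b = j₂ then (1 : R) else 0) else 0)
          + (if a = j₂ then (if b = j₁ then (-1 : R) else 0) else 0) := by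
    intro a b
    split_ifs <;> simp_all
  simp only [hsplit, mul_add, mul_ite, mul_zero, mul_one, mul_neg, Finset.sum_add_distrib,
    Finset.sum_ite_eq', Finset.mem_univ, if_true]
  ring

lemma dj_submatrix_updateRow {l o m' n' : Type*} [DecidableEq l] [DecidableEq m']
    (A : Matrix m' n' R) (j : m') (v : n' → R) (f : l → m') (g : o → n')
    (hf : Function.Injective f) (j' : l) (hj : f j' = j) :
    (A.updateRow j v).submatrix f g = (A.submatrix f g).updateRow j' (v ∘ g) := by
  ext i c
  by_cases hi : i = j'
  · subst hi
    simp [hj]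
  · have hfi : f i ≠ j := fun hfi => hi (hf (hfi.trans hj.symm))
    simp [Matrix.updateRow_ne hfi, Matrix.updateRow_ne hi]

lemma dj_key {R : Type*} [CommRing R] [IsDomain R] (n : ℕ)
    (M : Matrix (Fin (n + 2)) (Fin (n + 2)) R) (hd : M.det ≠ 0)
    (j₁ j₂ k₁ k₂ : Fin (n + 2)) (hj : j₁ < j₂) (hk : k₁ < k₂) :
    M.det * (M.submatrix (skipTwo j₁ j₂ hj) (skipTwo k₁ k₂ hk)).det
      = (M.submatrix j₁.succAbove k₁.succAbove).det *
          (M.submatrix j₂.succAbove k₂.succAbove).det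
        - (M.submatrix j₁.succAbove k₂.succAbove).det *
          (M.submatrix j₂.succAbove k₁.succAbove).det := by
  have hjne : j₁ ≠ j₂ := ne_of_lt hj
  have hkne : k₁ ≠ k₂ := ne_of_lt hk
  set j₁' : Fin (n + 1) := j₁.castLT (lt_of_lt_of_le (Fin.lt_iff_val_lt_val.mp hj)
    (Nat.lt_succ_iff.mp j₂.isLt)) with hj₁'
  set k₁' : Fin (n + 1) := k₁.castLT (lt_of_lt_of_le (Fin.lt_iff_val_lt_val.mp hk)
    (Nat.lt_succ_iff.mp k₂.isLt)) with hk₁'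
  have hfj : j₂.succAbove j₁' = j₁ := by
    rw [Fin.succAbove_of_castSucc_lt]
    · exact Fin.castSucc_castLT _ _
    · rw [Fin.castSucc_castLT]; exact hj
  have hfk : k₂.succAbove k₁' = k₁ := by
    rw [Fin.succAbove_of_castSucc_lt]
    · exact Fin.castSucc_castLT _ _
    · rw [Fin.castSucc_castLT]; exact hk
  set d := M.det with hdd
  -- determinant of M with the two rows replaced by basis vectors
  have hN : ((M.updateRow j₁ (Pi.single k₁ (1 : R))).updateRow j₂ (Pi.single k₂ 1)).det
      = (-1 : R) ^ (j₂.val + k₂.val) * ((-1 : R) ^ (j₁.val + k₁.val) *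
          (M.submatrix (skipTwo j₁ j₂ hj) (skipTwo k₁ k₂ hk)).det) := by
    rw [← adjugate_apply, adjugate_fin_succ_eq_det_submatrix]
    congr 1
    rw [dj_submatrix_updateRow _ j₁ _ _ _ (Fin.succAbove_right_injective) j₁' hfj]
    have hcomp : (Pi.single k₁ (1 : R)) ∘ k₂.succAbove = Pi.single k₁' 1 := by
      funext c
      simp only [Function.comp_apply, Pi.single_apply]
      rw [← hfk]
      simp [Fin.succAbove_right_injective.eq_iff]
    rw [hcomp, ← adjugate_apply, adjugate_fin_succ_eq_det_submatrix, submatrix_submatrix]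
    rfl
  -- rows of the adjugate multiplied by M
  have hrow : ∀ k : Fin (n + 2), (adjugate M k) ᵥ* M = d • (Pi.single k 1 : Fin (n + 2) → R) := by
    intro k
    funext c
    have hc := congrFun (congrFun (adjugate_mul M) k) c
    simp only [Matrix.mul_apply, Matrix.smul_apply, Matrix.one_apply, smul_eq_mul] at hc
    simp only [Matrix.vecMul, dotProduct, Pi.smul_apply, Pi.single_apply, smul_eq_mul]
    rw [hc]
    by_cases hck : c = k
    · subst hck; simp [hdd]
    · simp [hck, Ne.symm hck]
  -- product of the auxiliary matrix with M
  have hPM : (((1 : Matrix (Fin (n + 2)) (Fin (n + 2)) R).updateRow j₁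
        (adjugate M k₁)).updateRow j₂ (adjugate M k₂)) * M
      = (M.updateRow j₁ (d • (Pi.single k₁ 1 : Fin (n + 2) → R))).updateRow j₂ (d • (Pi.single k₂ 1 : Fin (n + 2) → R)) := by
    rw [dj_updateRow_mul, dj_updateRow_mul, one_mul, hrow, hrow]
  have hdetPM : ((((1 : Matrix (Fin (n + 2)) (Fin (n + 2)) R).updateRow j₁
        (adjugate M k₁)).updateRow j₂ (adjugate M k₂))).det * d
      = d * (d * (((M.updateRow j₁ (Pi.single k₁ 1)).updateRow j₂ (Pi.single k₂ 1))).det) := by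
    rw [← det_mul, hPM, det_updateRow_smul, dj_updateRow_comm _ _ _ _ _ hjne,
      det_updateRow_smul, dj_updateRow_comm _ _ _ _ _ hjne.symm]
  have hcancel : ((((1 : Matrix (Fin (n + 2)) (Fin (n + 2)) R).updateRow j₁
        (adjugate M k₁)).updateRow j₂ (adjugate M k₂))).det
      = d * ((-1 : R) ^ (j₂.val + k₂.val) * ((-1 : R) ^ (j₁.val + k₁.val) *
          (M.submatrix (skipTwo j₁ j₂ hj) (skipTwo k₁ k₂ hk)).det)) := by
    apply mul_right_cancel₀ hd
    rw [hdetPM, hN]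
    ring
  have hP2 : ((((1 : Matrix (Fin (n + 2)) (Fin (n + 2)) R).updateRow j₁
        (adjugate M k₁)).updateRow j₂ (adjugate M k₂))).det
      = (-1 : R) ^ (j₁.val + k₁.val + (j₂.val + k₂.val)) *
          ((M.submatrix j₁.succAbove k₁.succAbove).det *
            (M.submatrix j₂.succAbove k₂.succAbove).det
          - (M.submatrix j₁.succAbove k₂.succAbove).det *
            (M.submatrix j₂.succAbove k₁.succAbove).det) := by
    rw [dj_det_double_update _ _ hjne, adjugate_fin_succ_eq_det_submatrix,
      adjugate_fin_succ_eq_det_submatrix, adjugate_fin_succ_eq_det_submatrix,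
      adjugate_fin_succ_eq_det_submatrix]
    ring
  have h2 : (-1 : R) ^ (j₁.val + k₁.val + (j₂.val + k₂.val)) *
      ((M.submatrix j₁.succAbove k₁.succAbove).det *
          (M.submatrix j₂.succAbove k₂.succAbove).det
        - (M.submatrix j₁.succAbove k₂.succAbove).det *
          (M.submatrix j₂.succAbove k₁.succAbove).det)
      = (-1 : R) ^ (j₁.val + k₁.val + (j₂.val + k₂.val)) *
        (d * (M.submatrix (skipTwo j₁ j₂ hj) (skipTwo k₁ k₂ hk)).det) := by
    rw [← hP2, hcancel]
    ring
  have := mul_left_cancel₀ (pow_ne_zero _ (neg_ne_zero.mpr (one_ne_zero (α := R)))) h2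
  exact this.symm

end DJaux

/-- Desnanot–Jacobi (Dodgson) identity:
`det M · M[{j₁,j₂};{k₁,k₂}] = M[{j₁};{k₁}]·M[{j₂};{k₂}] - M[{j₁};{k₂}]·M[{j₂};{k₁}]`. -/
theorem desnanot_jacobi
    {R : Type*} [CommRing R] (n : ℕ)
    (M : Matrix (Fin (n + 2)) (Fin (n + 2)) R)
    (j₁ j₂ k₁ k₂ : Fin (n + 2)) (hj : j₁ < j₂) (hk : k₁ < k₂) :
    M.det * (M.submatrix (skipTwo j₁ j₂ hj) (skipTwo k₁ k₂ hk)).det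
      = (M.submatrix j₁.succAbove k₁.succAbove).det *
          (M.submatrix j₂.succAbove k₂.succAbove).det
        - (M.submatrix j₁.succAbove k₂.succAbove).det *
          (M.submatrix j₂.succAbove k₁.succAbove).det := by
  have hA := dj_key n (mvPolynomialX (Fin (n + 2)) (Fin (n + 2)) ℤ)
    (det_mvPolynomialX_ne_zero _ ℤ) j₁ j₂ k₁ k₂ hj hk
  have hmap := congrArg (MvPolynomial.aeval
    (fun p : (Fin (n + 2)) × (Fin (n + 2)) => M p.1 p.2) : _ →ₐ[ℤ] R) hA
  have hXM : (mvPolynomialX (Fin (n + 2)) (Fin (n + 2)) ℤ).map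
      ⇑(MvPolynomial.aeval (fun p : (Fin (n + 2)) × (Fin (n + 2)) => M p.1 p.2) : _ →ₐ[ℤ] R)
      = M := by
    simpa only [AlgHom.mapMatrix_apply] using
      mvPolynomialX_mapMatrix_aeval ℤ M
  simp only [_root_.map_sub, _root_.map_mul, AlgHom.map_det, AlgHom.mapMatrix_apply,
    ← Matrix.submatrix_map, hXM] at hmap
  exact hmap
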